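/- For any [n,k] linear code C over a finite field F_q with q elements, k ≥ 1, and minimum distance d_min, the weight enumerator polynomial satisfies W_C(Z) = 1 + sum over all subsets U of {1,...,n} with |U| ≤ n - d_min of Z^{n-|U|} (1-Z)^{|U|} (q^{k-ρ(U)} - 1), as an identity of polynomials in the variable Z with rational coefficients. -/
import Mathlib

open Polynomial Finset Matrix

private lemma aux_pow_sum (n z : ℕ) (hz : z ≤ n) (Z : Finset (Fin n)) (hZ : Z.card = z) :
    ∑ U ∈ Z.powerset, (X : ℚ[X]) ^ (n - U.card) * (1 - X) ^ U.card = X ^ (n - z) := by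
  rw [Finset.sum_powerset_apply_card (fun m => (X : ℚ[X]) ^ (n - m) * (1 - X) ^ m), hZ]
  have key : ∀ j ∈ Finset.range (z + 1),
      z.choose j • ((X : ℚ[X]) ^ (n - j) * (1 - X) ^ j)
        = (X : ℚ[X]) ^ (n - z) * ((1 - X) ^ j * X ^ (z - j) * (z.choose j : ℚ[X])) := by
    intro j hj
    rw [Finset.mem_range, Nat.lt_succ_iff] at hj
    have : n - j = (n - z) + (z - j) := by omega
    rw [this, pow_add, nsmul_eq_mul]
    ring
  rw [Finset.sum_congr rfl key, ← Finset.mul_sum, ← add_pow (1 - X : ℚ[X]) X z]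
  simp
private lemma aux_count (n k : ℕ) (F : Type) [Field F] [Fintype F] [DecidableEq F]
    (G : Matrix (Fin k) (Fin n) F) (hG : G.rank = k)
    (C : Submodule F (Fin n → F))
    (hC : ∀ c, c ∈ C ↔ ∃ x : Fin k → F, ∀ j, c j = ∑ i, x i * G i j)
    (U : Finset (Fin n)) :
    Nat.card {c : Fin n → F // c ∈ C ∧ ∀ j ∈ U, c j = 0}
      = Fintype.card F ^ (k - Matrix.rank (Matrix.of fun (i : Fin k) (j : ↥U) => G i j.1)) := by
  classical
  set M : Matrix (↥U) (Fin k) F := Matrix.of fun (j : ↥U) (i : Fin k) => G i j.1 with hM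
  set L : (Fin k → F) →ₗ[F] (↥U → F) := M.mulVecLin with hL
  have hvec : ∀ (x : Fin k → F) (j : Fin n), Matrix.vecMul x G j = ∑ i, x i * G i j := by
    intro x j; simp [Matrix.vecMul, dotProduct]
  -- injectivity of x ↦ x ⬝ᵥ G
  have hinj : Function.Injective (fun x : Fin k → F => Matrix.vecMul x G) := by
    have h1 := LinearMap.finrank_range_add_finrank_ker (Matrix.mulVecLin Gᵀ)
    have h2 : Gᵀ.rank = k := by rw [Matrix.rank_transpose]; exact hG
    rw [Module.finrank_pi] at h1
    have h3 : Module.finrank F (LinearMap.ker (Matrix.mulVecLin Gᵀ)) = 0 := by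
      have : Gᵀ.rank = Module.finrank F (LinearMap.range (Matrix.mulVecLin Gᵀ)) := rfl
      simp at h1
      omega
    have h4 : LinearMap.ker (Matrix.mulVecLin Gᵀ) = ⊥ :=
      Submodule.finrank_eq_zero.mp h3
    have h5 := LinearMap.ker_eq_bot.mp h4
    intro x y hxy
    apply h5
    simpa [Matrix.mulVecLin, Matrix.mulVec_transpose] using hxy
  have hrank : Module.finrank F (LinearMap.ker L)
      = k - Matrix.rank (Matrix.of fun (i : Fin k) (j : ↥U) => G i j.1) := by
    have h1 := LinearMap.finrank_range_add_finrank_ker L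
    rw [Module.finrank_pi] at h1
    have h2 : Matrix.rank M = Module.finrank F (LinearMap.range L) := rfl
    have h3 : Matrix.rank (Matrix.of fun (i : Fin k) (j : ↥U) => G i j.1) = Matrix.rank M := by
      rw [show (Matrix.of fun (i : Fin k) (j : ↥U) => G i j.1) = Mᵀ from rfl,
        Matrix.rank_transpose]
    rw [h3, h2]
    simp at h1
    omega
  -- the bijection
  have hcard : Nat.card (LinearMap.ker L)
      = Nat.card {c : Fin n → F // c ∈ C ∧ ∀ j ∈ U, c j = 0} := by
    apply Nat.card_eq_of_bijective
      (f := fun x => (⟨Matrix.vecMul x.1 G, ?_, ?_⟩ :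
        {c : Fin n → F // c ∈ C ∧ ∀ j ∈ U, c j = 0}))
    · constructor
      · intro x y hxy
        have := hinj (congrArg Subtype.val hxy)
        exact Subtype.ext this
      · rintro ⟨c, hc, hcU⟩
        obtain ⟨x, hx⟩ := (hC c).mp hc
        have hxc : Matrix.vecMul x G = c := by
          funext j; rw [hvec, ← hx]
        have hxker : x ∈ LinearMap.ker L := by
          rw [LinearMap.mem_ker]
          funext j
          have : L x j = ∑ i, x i * G i j.1 := by
            simp [hL, hM, Matrix.mulVecLin_apply, Matrix.mulVec, dotProduct, mul_comm]
          rw [this, ← hx]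
          simpa using hcU j.1 j.2
        exact ⟨⟨x, hxker⟩, Subtype.ext hxc⟩
    · exact (hC _).mpr ⟨x.1, fun j => (hvec x.1 j).symm⟩
    · intro j hj
      have hx := x.2
      rw [LinearMap.mem_ker] at hx
      have := congrFun hx ⟨j, hj⟩
      simp only [hL, hM, Matrix.mulVecLin_apply, Matrix.mulVec, dotProduct,
        Matrix.of_apply, Pi.zero_apply] at this
      rw [hvec]
      rw [← this]
      exact Finset.sum_congr rfl fun i _ => mul_comm _ _
  rw [← hcard, ← hrank]
  have : Fintype (LinearMap.ker L) := Fintype.ofFinite _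
  rw [Nat.card_eq_fintype_card, Module.card_eq_pow_finrank (K := F)]
theorem stmt_1 (n k q : ℕ) (F : Type) [Field F] [Fintype F] [DecidableEq F]
    (hq : q = Fintype.card F) (hk : 1 ≤ k)
    (G : Matrix (Fin k) (Fin n) F) (hG : G.rank = k)
    (C : Submodule F (Fin n → F))
    (hC : ∀ c, c ∈ C ↔ ∃ x : Fin k → F, ∀ j, c j = ∑ i, x i * G i j)
    (A : ℕ → ℕ)
    (hA : ∀ w, A w = Nat.card {c : Fin n → F // c ∈ C ∧ hammingNorm c = w})
    (ρ : Finset (Fin n) → ℕ)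
    (hρ : ∀ U : Finset (Fin n),
      ρ U = Matrix.rank (Matrix.of fun (i : Fin k) (j : ↥U) => G i j.1))
    (dmin : ℕ)
    (hdmin : IsLeast {w | ∃ c ∈ C, c ≠ 0 ∧ hammingNorm c = w} dmin) :
    ∑ w ∈ Finset.range (n + 1), (A w : ℚ[X]) * X ^ w =
      1 + ∑ U ∈ Finset.univ.filter (fun U : Finset (Fin n) => U.card ≤ n - dmin),
        X ^ (n - U.card) * (1 - X) ^ U.card * ((q : ℚ[X]) ^ (k - ρ U) - 1) := by
  classical
  set SC : Finset (Fin n → F) := Finset.univ.filter (· ∈ C) with hSC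
  have hwtle : ∀ c : Fin n → F, hammingNorm c ≤ n := by
    intro c
    calc hammingNorm c ≤ Fintype.card (Fin n) := Finset.card_filter_le _ _
    _ = n := by simp
  have hAw : ∀ w, A w = (SC.filter (fun c => hammingNorm c = w)).card := by
    intro w
    rw [hA, Nat.card_congr (Equiv.subtypeEquivRight (q := fun c =>
      c ∈ SC.filter (fun c => hammingNorm c = w)) (by simp [hSC]))]
    exact Nat.card_eq_finsetCard _
  have stepA : (∑ w ∈ Finset.range (n + 1), (A w : ℚ[X]) * X ^ w)
      = ∑ c ∈ SC, (X : ℚ[X]) ^ hammingNorm c := by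
    rw [← Finset.sum_fiberwise_of_maps_to (g := hammingNorm) (t := Finset.range (n + 1))
      (fun c _ => Finset.mem_range.mpr (Nat.lt_succ_of_le (hwtle c)))
      (fun c => (X : ℚ[X]) ^ hammingNorm c)]
    refine Finset.sum_congr rfl fun w _ => ?_
    rw [Finset.sum_congr rfl (fun c hc => by rw [(Finset.mem_filter.mp hc).2]),
      Finset.sum_const, hAw w, nsmul_eq_mul]
  set zs : (Fin n → F) → Finset (Fin n) := fun c => Finset.univ.filter (fun i => c i = 0)
    with hzsdef
  have hzscard : ∀ c : Fin n → F, (zs c).card = n - hammingNorm c := by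
    intro c
    show (Finset.univ.filter (fun i => c i = 0)).card = n - hammingNorm c
    have h1 := Finset.card_filter_add_card_filter_not
      (s := (Finset.univ : Finset (Fin n))) (p := fun i => c i = 0)
    simp only [Finset.card_univ, Fintype.card_fin] at h1
    have h2 : (Finset.univ.filter (fun i => ¬ c i = 0)).card = hammingNorm c := rfl
    have h3 : hammingNorm c ≤ n := hwtle c
    omega
  have stepB : ∀ c : Fin n → F,
      (X : ℚ[X]) ^ hammingNorm c
        = ∑ U ∈ (zs c).powerset, (X : ℚ[X]) ^ (n - U.card) * (1 - X) ^ U.card := by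
    intro c
    rw [aux_pow_sum n (n - hammingNorm c) (by omega) (zs c) (hzscard c)]
    congr 1
    have := hwtle c
    omega
  have stepC : ∀ c : Fin n → F,
      (zs c).powerset = Finset.univ.filter (fun U : Finset (Fin n) => ∀ j ∈ U, c j = 0) := by
    intro c
    ext U
    simp [hzsdef, Finset.mem_powerset, Finset.subset_iff]
  have stepE : ∀ U : Finset (Fin n),
      (SC.filter (fun c => ∀ j ∈ U, c j = 0)).card = q ^ (k - ρ U) := by
    intro U
    rw [hρ, hq, ← aux_count n k F G hG C hC U]
    rw [Nat.card_congr (Equiv.subtypeEquivRight (q := fun c =>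
      c ∈ SC.filter (fun c => ∀ j ∈ U, c j = 0)) (by simp [hSC]))]
    exact (Nat.card_eq_finsetCard _).symm
  have stepD : (∑ c ∈ SC, (X : ℚ[X]) ^ hammingNorm c)
      = ∑ U ∈ (Finset.univ : Finset (Finset (Fin n))),
          (q ^ (k - ρ U)) • ((X : ℚ[X]) ^ (n - U.card) * (1 - X) ^ U.card) := by
    calc ∑ c ∈ SC, (X : ℚ[X]) ^ hammingNorm c
        = ∑ c ∈ SC, ∑ U ∈ Finset.univ.filter (fun U : Finset (Fin n) => ∀ j ∈ U, c j = 0),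
            (X : ℚ[X]) ^ (n - U.card) * (1 - X) ^ U.card := by
          refine Finset.sum_congr rfl fun c _ => ?_
          rw [stepB c, stepC c]
      _ = ∑ c ∈ SC, ∑ U ∈ (Finset.univ : Finset (Finset (Fin n))),
            if (∀ j ∈ U, c j = 0) then (X : ℚ[X]) ^ (n - U.card) * (1 - X) ^ U.card else 0 := by
          refine Finset.sum_congr rfl fun c _ => ?_
          rw [Finset.sum_filter]
      _ = ∑ U ∈ (Finset.univ : Finset (Finset (Fin n))), ∑ c ∈ SC,
            if (∀ j ∈ U, c j = 0) then (X : ℚ[X]) ^ (n - U.card) * (1 - X) ^ U.card else 0 :=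
          Finset.sum_comm
      _ = _ := by
          refine Finset.sum_congr rfl fun U _ => ?_
          rw [← Finset.sum_filter, Finset.sum_const, stepE U]
  rw [stepA, stepD]
  have hsplit : ∀ U : Finset (Fin n),
      (q ^ (k - ρ U)) • ((X : ℚ[X]) ^ (n - U.card) * (1 - X) ^ U.card)
        = (X : ℚ[X]) ^ (n - U.card) * (1 - X) ^ U.card * ((q : ℚ[X]) ^ (k - ρ U) - 1)
          + (X : ℚ[X]) ^ (n - U.card) * (1 - X) ^ U.card := by
    intro U
    rw [nsmul_eq_mul]
    push_cast
    ring
  rw [Finset.sum_congr rfl fun U _ => hsplit U, Finset.sum_add_distrib]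
  have hone : ∑ U ∈ (Finset.univ : Finset (Finset (Fin n))),
      (X : ℚ[X]) ^ (n - U.card) * (1 - X) ^ U.card = 1 := by
    rw [← Finset.powerset_univ,
      aux_pow_sum n n le_rfl Finset.univ (by simp), Nat.sub_self, pow_zero]
  rw [hone, add_comm]
  congr 1
  symm
  apply Finset.sum_subset (Finset.filter_subset _ _)
  intro U _ hU
  simp only [Finset.mem_filter, Finset.mem_univ, true_and, not_le] at hU
  have hdn : dmin ≤ n := by
    obtain ⟨c, hcC, hc0, hcw⟩ := hdmin.1
    rw [← hcw]
    exact hwtle c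
  have hNU : (SC.filter (fun c => ∀ j ∈ U, c j = 0)) = {0} := by
    ext c
    simp only [Finset.mem_filter, Finset.mem_singleton, hSC, Finset.mem_univ, true_and]
    constructor
    · rintro ⟨hcC, hcU⟩
      by_contra hc0
      have h1 : dmin ≤ hammingNorm c := hdmin.2 ⟨c, hcC, hc0, rfl⟩
      have h2 : hammingNorm c ≤ n - U.card := by
        have hsub : (Finset.univ.filter (fun i => c i ≠ 0)) ⊆ Uᶜ := by
          intro i hi
          simp only [Finset.mem_filter] at hi
          simp only [Finset.mem_compl]
          intro hiU
          exact hi.2 (hcU i hiU)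
        calc hammingNorm c ≤ Uᶜ.card := Finset.card_le_card hsub
          _ = n - U.card := by rw [Finset.card_compl]; simp
      have h3 : U.card ≤ n := by
        calc U.card ≤ Fintype.card (Fin n) := Finset.card_le_univ U
        _ = n := by simp
      omega
    · rintro rfl
      exact ⟨C.zero_mem, fun j _ => rfl⟩
  have hq1 : q ^ (k - ρ U) = 1 := by
    rw [← stepE U, hNU, Finset.card_singleton]
  have hz : ((q : ℚ[X]) ^ (k - ρ U) - 1) = 0 := by
    have h : ((q ^ (k - ρ U) : ℕ) : ℚ[X]) = 1 := by rw [hq1]; norm_num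
    push_cast at h
    rw [h, sub_self]
  rw [hz, mul_zero]
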